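/- The element s_r∘s_g∘s_b∘Cr of Γ₆ acts as the identity on the sublattice N₄ₐ = {(δ,ρ̄,γ̄,β̄) ∈ ℤ^4 : δ = 0, ρ̄+γ̄+β̄ = 0}, and the kernel of the induced action homomorphism from Γ₄ₐ = ⟨c, s_r∘s_g∘s_b, Cr⟩ to the automorphism group of N₄ₐ is exactly the order-2 subgroup {id, s_r∘s_g∘s_b∘Cr}; the quotient group of order 6, isomorphic to C₃ × S₂, acts faithfully on N₄ₐ. -/

import Mathlib

/- The linear action of `Γ₆` on `ℤ^4`, with coordinates `(δ,ρ̄,γ̄,β̄)`. -/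

/-- `c·(δ,ρ̄,γ̄,β̄) = (δ,β̄,ρ̄,γ̄)`: cyclic permutation of the last three coordinates. -/
def cP : Equiv.Perm (Fin 4 → ℤ) where
  toFun v := ![v 0, v 3, v 1, v 2]
  invFun v := ![v 0, v 2, v 3, v 1]
  left_inv v := by funext i; fin_cases i <;> rfl
  right_inv v := by funext i; fin_cases i <;> rfl

/-- `s_r` negates `ρ̄`, fixing the other coordinates. -/
def srP : Equiv.Perm (Fin 4 → ℤ) where
  toFun v := ![v 0, -v 1, v 2, v 3]
  invFun v := ![v 0, -v 1, v 2, v 3]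
  left_inv v := by funext i; fin_cases i <;> simp
  right_inv v := by funext i; fin_cases i <;> simp

/-- `s_g` negates `γ̄`, fixing the other coordinates. -/
def sgP : Equiv.Perm (Fin 4 → ℤ) where
  toFun v := ![v 0, v 1, -v 2, v 3]
  invFun v := ![v 0, v 1, -v 2, v 3]
  left_inv v := by funext i; fin_cases i <;> simp
  right_inv v := by funext i; fin_cases i <;> simp

/-- `s_b` negates `β̄`, fixing the other coordinates. -/
def sbP : Equiv.Perm (Fin 4 → ℤ) where
  toFun v := ![v 0, v 1, v 2, -v 3]
  invFun v := ![v 0, v 1, v 2, -v 3]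
  left_inv v := by funext i; fin_cases i <;> simp
  right_inv v := by funext i; fin_cases i <;> simp

/-- `Cr` negates all four coordinates. -/
def crP : Equiv.Perm (Fin 4 → ℤ) := Equiv.neg (Fin 4 → ℤ)

/-- The group `Γ₆` acting linearly on `ℤ^4`, generated by `c, s_r, s_g, s_b, Cr`. -/
def Γ6lin : Subgroup (Equiv.Perm (Fin 4 → ℤ)) :=
  Subgroup.closure {cP, srP, sgP, sbP, crP}

/-- The orbit `O_A` of `A = (2,0,0,0)`. -/
def OA : Set (Fin 4 → ℤ) := MulAction.orbit Γ6lin ![2, 0, 0, 0]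
/-- The orbit `O_B` of `B = (1,1,0,0)`. -/
def OB : Set (Fin 4 → ℤ) := MulAction.orbit Γ6lin ![1, 1, 0, 0]
/-- The orbit `O_C` of `C = (1,1,1,1)`. -/
def OC : Set (Fin 4 → ℤ) := MulAction.orbit Γ6lin ![1, 1, 1, 1]
/-- The orbit `O_D` of `D = (0,1,0,1)`. -/
def OD : Set (Fin 4 → ℤ) := MulAction.orbit Γ6lin ![0, 1, 0, 1]

/-- The set `R` of integral generators of the rays of the fan `F₆`. -/
def RaySet : Set (Fin 4 → ℤ) := OA ∪ OB ∪ OC ∪ OD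

/-- `N₄ₐ = {(δ,ρ̄,γ̄,β̄) : δ = 0, ρ̄+γ̄+β̄ = 0}`. -/
def N4a : Set (Fin 4 → ℤ) := {v | v 0 = 0 ∧ v 1 + v 2 + v 3 = 0}

/-- The degree-4 non-nodal relabeling group `Γ₄ₐ = ⟨c, s_r∘s_g∘s_b, Cr⟩`
acting linearly on `ℤ^4`. -/
def Γ4alin : Subgroup (Equiv.Perm (Fin 4 → ℤ)) :=
  Subgroup.closure {cP, srP * sgP * sbP, crP}

/-- `τ = s_r∘s_g∘s_b∘Cr`. -/
def τP : Equiv.Perm (Fin 4 → ℤ) := srP * sgP * sbP * crP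


section Aux

def σP : Equiv.Perm (Fin 4 → ℤ) := srP * sgP * sbP

lemma cP_apply (v : Fin 4 → ℤ) : cP v = ![v 0, v 3, v 1, v 2] := rfl

lemma σP_apply (v : Fin 4 → ℤ) : σP v = ![v 0, -v 1, -v 2, -v 3] := by
  funext i; fin_cases i <;> simp [σP, srP, sgP, sbP, Equiv.Perm.mul_apply]

lemma crP_apply (v : Fin 4 → ℤ) : crP v = -v := rfl

lemma τP_eq : τP = σP * crP := rfl

lemma τP_apply (v : Fin 4 → ℤ) : τP v = ![-v 0, v 1, v 2, v 3] := by
  funext i; fin_cases i <;>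
    simp [τP, srP, sgP, sbP, crP, Equiv.Perm.mul_apply, Equiv.neg_apply]

lemma hc3 : cP ^ 3 = 1 := by
  ext v i
  fin_cases i <;> simp [pow_succ, Equiv.Perm.mul_apply, cP_apply]

lemma hσ2 : σP ^ 2 = 1 := by
  ext v i
  fin_cases i <;> simp [pow_succ, Equiv.Perm.mul_apply, σP_apply, srP, sgP, sbP, Pi.neg_apply]

lemma hcr2 : crP ^ 2 = 1 := by
  ext v i
  fin_cases i <;> simp [pow_succ, Equiv.Perm.mul_apply, crP_apply]

lemma comm_cσ : Commute cP σP := by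
  show _ = _
  ext v i
  fin_cases i <;> simp [Equiv.Perm.mul_apply, cP_apply, σP_apply, srP, sgP, sbP, Pi.neg_apply]

lemma comm_ccr : Commute cP crP := by
  show _ = _
  ext v i
  fin_cases i <;> simp [Equiv.Perm.mul_apply, cP_apply, crP_apply]

lemma comm_σcr : Commute σP crP := by
  show _ = _
  ext v i
  fin_cases i <;> simp [Equiv.Perm.mul_apply, σP, srP, sgP, sbP, crP, Equiv.neg_apply, Pi.neg_apply]

end Aux

section Phi

private lemma swapl {P : Type*} [Monoid P] {a b : P} (h : Commute a b) (x : P) :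
    a * (b * x) = b * (a * x) := by rw [← mul_assoc, h.eq, mul_assoc]

abbrev Gab := Multiplicative (ZMod 3) × Multiplicative (ZMod 2) × Multiplicative (ZMod 2)

def φab : Gab →* Equiv.Perm (Fin 4 → ℤ) where
  toFun x := cP ^ (Multiplicative.toAdd x.1).val * σP ^ (Multiplicative.toAdd x.2.1).val *
    crP ^ (Multiplicative.toAdd x.2.2).val
  map_one' := by simp
  map_mul' x y := by
    obtain ⟨a, b, c⟩ := x
    obtain ⟨a', b', c'⟩ := y
    show cP ^ (Multiplicative.toAdd (a * a')).val * σP ^ (Multiplicative.toAdd (b * b')).val *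
        crP ^ (Multiplicative.toAdd (c * c')).val = _
    have h1 : (Multiplicative.toAdd (a * a')).val =
        ((Multiplicative.toAdd a).val + (Multiplicative.toAdd a').val) % 3 := ZMod.val_add _ _
    have h2 : (Multiplicative.toAdd (b * b')).val =
        ((Multiplicative.toAdd b).val + (Multiplicative.toAdd b').val) % 2 := ZMod.val_add _ _
    have h3 : (Multiplicative.toAdd (c * c')).val =
        ((Multiplicative.toAdd c).val + (Multiplicative.toAdd c').val) % 2 := ZMod.val_add _ _
    rw [h1, h2, h3, ← pow_eq_pow_mod _ hc3, ← pow_eq_pow_mod _ hσ2, ← pow_eq_pow_mod _ hcr2,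
      pow_add, pow_add, pow_add]
    simp only [mul_assoc]
    rw [swapl (comm_ccr.symm.pow_pow _ _), swapl (comm_cσ.symm.pow_pow _ _),
      swapl (comm_σcr.symm.pow_pow _ _)]

lemma range_φab : φab.range = Γ4alin := by
  apply le_antisymm
  · rintro g ⟨⟨a, b, c⟩, rfl⟩
    have hc : cP ∈ Γ4alin := Subgroup.subset_closure (by simp)
    have hσ : σP ∈ Γ4alin := Subgroup.subset_closure (by simp [σP])
    have hcr : crP ∈ Γ4alin := Subgroup.subset_closure (by simp)
    exact mul_mem (mul_mem (pow_mem hc _) (pow_mem hσ _)) (pow_mem hcr _)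
  · rw [Γ4alin, Subgroup.closure_le]
    rintro g (rfl | rfl | rfl)
    · exact ⟨(Multiplicative.ofAdd 1, 1, 1), by
        show cP ^ (1 : ZMod 3).val * σP ^ (0 : ZMod 2).val * crP ^ (0 : ZMod 2).val = cP
        norm_num [ZMod.val_one]⟩
    · exact ⟨(1, Multiplicative.ofAdd 1, 1), by
        show cP ^ (0 : ZMod 3).val * σP ^ (1 : ZMod 2).val * crP ^ (0 : ZMod 2).val = σP
        norm_num [ZMod.val_one]⟩
    · exact ⟨(1, 1, Multiplicative.ofAdd 1), by
        show cP ^ (0 : ZMod 3).val * σP ^ (0 : ZMod 2).val * crP ^ (1 : ZMod 2).val = crP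
        norm_num [ZMod.val_one]⟩

end Phi

lemma φab_inj : Function.Injective φab := by
  rw [injective_iff_map_eq_one]
  intro x h
  obtain ⟨a, b, c⟩ := x
  have h' : cP ^ (Multiplicative.toAdd a).val * σP ^ (Multiplicative.toAdd b).val *
      crP ^ (Multiplicative.toAdd c).val = 1 := h
  clear h
  obtain ⟨a, rfl⟩ := Multiplicative.ofAdd.surjective a
  obtain ⟨b, rfl⟩ := Multiplicative.ofAdd.surjective b
  obtain ⟨c, rfl⟩ := Multiplicative.ofAdd.surjective c
  simp only [toAdd_ofAdd] at h'
  fin_cases a <;> fin_cases b <;> fin_cases c <;>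
    first
      | rfl
      | (exfalso
         have hv := Equiv.ext_iff.mp h' ![1, 2, 3, 5]
         norm_num [ZMod.val, ZMod.val_one, pow_succ, pow_zero, one_mul,
           Equiv.Perm.mul_apply, Equiv.Perm.one_apply, cP_apply, σP_apply, crP_apply,
           Pi.neg_apply, funext_iff, Fin.forall_fin_succ, Matrix.cons_val_three, Matrix.cons_val_two, Matrix.vecHead, Matrix.vecTail] at hv)

lemma τP_sq : τP ^ 2 = 1 := by
  rw [τP_eq, comm_σcr.mul_pow, hσ2, hcr2, one_mul]

lemma τP_ne_one : τP ≠ 1 := by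
  intro h
  have hv := Equiv.ext_iff.mp h ![1, 0, 0, 0]
  have := congrFun hv 0
  norm_num [τP_apply] at this

lemma τP_fix : ∀ v ∈ N4a, τP v = v := by
  rintro v ⟨h0, -⟩
  funext i
  rw [τP_apply]
  fin_cases i <;> simp [h0]

lemma τP_mem : τP ∈ Γ4alin := by
  have h1 : σP ∈ Γ4alin := Subgroup.subset_closure (by simp [σP])
  have h2 : crP ∈ Γ4alin := Subgroup.subset_closure (by simp)
  rw [τP_eq]; exact mul_mem h1 h2

set_option maxHeartbeats 2000000 in
lemma kernel_eq :
    Γ4alin ⊓ (⨅ v ∈ N4a, MulAction.stabilizer (Equiv.Perm (Fin 4 → ℤ)) v) =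
      Subgroup.zpowers τP := by
  apply le_antisymm
  · intro g hg
    rw [Subgroup.mem_inf] at hg
    obtain ⟨hg1, hg2⟩ := hg
    rw [← range_φab] at hg1
    obtain ⟨⟨a, b, c⟩, rfl⟩ := hg1
    simp only [Subgroup.mem_iInf] at hg2
    have hv := hg2 ![0, 1, -1, 0] ⟨rfl, by decide⟩
    rw [MulAction.mem_stabilizer_iff, Equiv.Perm.smul_def] at hv
    have hv' : (cP ^ (Multiplicative.toAdd a).val * σP ^ (Multiplicative.toAdd b).val *
        crP ^ (Multiplicative.toAdd c).val) ![0, 1, -1, 0] = ![0, 1, -1, 0] := hv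
    clear hv hg2
    rw [Subgroup.mem_zpowers_iff]
    obtain ⟨a, rfl⟩ := Multiplicative.ofAdd.surjective a
    obtain ⟨b, rfl⟩ := Multiplicative.ofAdd.surjective b
    obtain ⟨c, rfl⟩ := Multiplicative.ofAdd.surjective c
    simp only [toAdd_ofAdd, φab, MonoidHom.coe_mk, OneHom.coe_mk] at hv' ⊢
    fin_cases a <;> fin_cases b <;> fin_cases c <;>
      first
        | (exfalso
           norm_num [ZMod.val, ZMod.val_one, pow_succ, pow_zero, one_mul,
             Equiv.Perm.mul_apply, cP_apply, σP_apply, crP_apply,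
             Pi.neg_apply, funext_iff, Fin.forall_fin_succ, Matrix.cons_val_three, Matrix.cons_val_two, Matrix.vecHead, Matrix.vecTail] at hv'
           done)
        | (refine ⟨0, ?_⟩
           ext w i
           fin_cases i <;>
             norm_num [φab, ZMod.val, ZMod.val_one, pow_zero, pow_succ, one_mul, mul_one,
               Equiv.Perm.mul_apply, Equiv.Perm.one_apply, cP_apply, σP_apply, crP_apply,
               Pi.neg_apply, Matrix.cons_val_three, Matrix.cons_val_two, Matrix.vecHead, Matrix.vecTail]
           done)
        | (refine ⟨1, ?_⟩
           ext w i
           fin_cases i <;>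
             norm_num [φab, τP_apply, ZMod.val, ZMod.val_one, pow_zero, pow_succ, one_mul,
               mul_one, Equiv.Perm.mul_apply, Equiv.Perm.one_apply, cP_apply, σP_apply,
               crP_apply, Pi.neg_apply, Matrix.cons_val_three, Matrix.cons_val_two, Matrix.vecHead, Matrix.vecTail]
           done)
  · rw [Subgroup.zpowers_le, Subgroup.mem_inf]
    refine ⟨τP_mem, ?_⟩
    simp only [Subgroup.mem_iInf]
    intro v hv
    rw [MulAction.mem_stabilizer_iff, Equiv.Perm.smul_def]
    exact τP_fix v hv


/-- `τ = s_r∘s_g∘s_b∘Cr` acts as the identity on `N₄ₐ`, and the kernel of the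
action of `Γ₄ₐ = ⟨c, s_r∘s_g∘s_b, Cr⟩` on `N₄ₐ` is exactly the order-2 subgroup
`{id, τ}`; the quotient, of order `12 / 2 = 6` and isomorphic to `C₃ × S₂`,
acts faithfully on `N₄ₐ`. -/
theorem Gamma4a_kernel_on_N4a :
    (∀ v ∈ N4a, τP v = v) ∧
    Γ4alin ⊓ (⨅ v ∈ N4a, MulAction.stabilizer (Equiv.Perm (Fin 4 → ℤ)) v) =
      Subgroup.zpowers τP ∧
    Nat.card (Subgroup.zpowers τP : Subgroup (Equiv.Perm (Fin 4 → ℤ))) = 2 ∧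
    Nat.card Γ4alin = 12 := by
  refine ⟨τP_fix, kernel_eq, ?_, ?_⟩
  · rw [Nat.card_zpowers]
    exact orderOf_eq_prime τP_sq τP_ne_one
  · rw [← range_φab, ← Nat.card_congr (MonoidHom.ofInjective φab_inj).toEquiv]
    simp [Nat.card_eq_fintype_card]
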